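/- (Hadamard three-circle property: log-convexity of r ↦ |f|_r in log r.) Let 0 < r1 ≤ r2 < ∞ and let f be an analytic function on A[r1,r2]. Then for all s, t, u with r1 ≤ s ≤ t ≤ u ≤ r2 and t = s^{1−θ} u^{θ} for some θ ∈ [0,1], one has |f|_t ≤ |f|_s^{1−θ} · |f|_u^{θ}. -/
import Mathlib


open Filter Set

/-- `a` is the coefficient family of a Laurent series defining an analytic function on the
closed annulus `A[r1,r2]`. -/
def IsLaurentOn {F : Type*} [NontriviallyNormedField F] (a : ℤ → F) (r1 r2 : ℝ) : Prop :=
  ∀ r : ℝ, r1 ≤ r → r ≤ r2 → Tendsto (fun n : ℤ => ‖a n‖ * r ^ n) cofinite (nhds 0)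

/-- The Gauss norm `|f|_r = sup_{n ∈ ℤ} |a_n| r^n`. -/
noncomputable def gaussNorm {F : Type*} [NontriviallyNormedField F] (a : ℤ → F) (r : ℝ) : ℝ :=
  sSup (Set.range fun n : ℤ => ‖a n‖ * r ^ n)

lemma bddAbove_of_tendsto_cofinite {f : ℤ → ℝ} (h : Tendsto f cofinite (nhds 0)) :
    BddAbove (Set.range f) := by
  have h1 : ∀ᶠ n in cofinite, f n < 1 := h.eventually (Iio_mem_nhds one_pos)
  rw [Filter.eventually_cofinite] at h1
  have hsub : Set.range f ⊆ (f '' {n | ¬ f n < 1}) ∪ Set.Iic 1 := by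
    rintro x ⟨n, rfl⟩
    by_cases hn : f n < 1
    · exact Or.inr hn.le
    · exact Or.inl ⟨n, hn, rfl⟩
  exact (((h1.image f).bddAbove).union bddAbove_Iic).mono hsub

/-- Hadamard three-circle property (log-convexity of `r ↦ |f|_r` in `log r`): for `f` analytic
on `A[r1,r2]` (`0 < r1 ≤ r2 < ∞`) and `r1 ≤ s ≤ t ≤ u ≤ r2` with `t = s^{1-θ} u^θ`,
`θ ∈ [0,1]`, one has `|f|_t ≤ |f|_s^{1-θ} · |f|_u^θ` (real powers). -/
theorem statement8 {F : Type*} [NontriviallyNormedField F] [IsUltrametricDist F]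
    [CompleteSpace F] (r1 r2 : ℝ) (h1 : 0 < r1) (h12 : r1 ≤ r2)
    (a : ℤ → F) (ha : IsLaurentOn a r1 r2)
    (s t u θ : ℝ) (hs : r1 ≤ s) (hst : s ≤ t) (htu : t ≤ u) (hu : u ≤ r2)
    (hθ0 : 0 ≤ θ) (hθ1 : θ ≤ 1) (ht : t = s ^ (1 - θ) * u ^ θ) :
    gaussNorm a t ≤ gaussNorm a s ^ (1 - θ) * gaussNorm a u ^ θ := by
  have hspos : 0 < s := h1.trans_le hs
  have hupos : 0 < u := hspos.trans_le (hst.trans htu)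
  have hθ1' : 0 ≤ 1 - θ := by linarith
  have hsu : s ≤ r2 := (hst.trans htu).trans hu
  have hur1 : r1 ≤ u := hs.trans (hst.trans htu)
  have bddS : BddAbove (Set.range fun n : ℤ => ‖a n‖ * s ^ n) :=
    bddAbove_of_tendsto_cofinite (ha s hs hsu)
  have bddU : BddAbove (Set.range fun n : ℤ => ‖a n‖ * u ^ n) :=
    bddAbove_of_tendsto_cofinite (ha u hur1 hu)
  have leS : ∀ n : ℤ, ‖a n‖ * s ^ n ≤ gaussNorm a s := fun n =>
    le_csSup bddS (Set.mem_range_self n)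
  have leU : ∀ n : ℤ, ‖a n‖ * u ^ n ≤ gaussNorm a u := fun n =>
    le_csSup bddU (Set.mem_range_self n)
  have hSnn : 0 ≤ gaussNorm a s :=
    le_trans (by positivity) (leS 0)
  have hUnn : 0 ≤ gaussNorm a u :=
    le_trans (by positivity) (leU 0)
  have key : ∀ n : ℤ, ‖a n‖ * t ^ n
      = (‖a n‖ * s ^ n) ^ (1 - θ) * (‖a n‖ * u ^ n) ^ θ := by
    intro n
    have hsn : (0:ℝ) ≤ s ^ n := (zpow_pos hspos n).le
    have hun : (0:ℝ) ≤ u ^ n := (zpow_pos hupos n).le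
    rw [Real.mul_rpow (norm_nonneg _) hsn, Real.mul_rpow (norm_nonneg _) hun]
    have hnorm : ‖a n‖ ^ (1 - θ) * ‖a n‖ ^ θ = ‖a n‖ := by
      rw [← Real.rpow_add' (norm_nonneg _) (by norm_num)]
      simp
    have hpow : (s ^ n) ^ (1 - θ) * (u ^ n) ^ θ = t ^ n := by
      have e1 : ((s : ℝ) ^ n) ^ (1 - θ) = s ^ ((n : ℝ) * (1 - θ)) := by
        rw [← Real.rpow_intCast s n, ← Real.rpow_mul hspos.le]
      have e2 : ((u : ℝ) ^ n) ^ θ = u ^ ((n : ℝ) * θ) := by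
        rw [← Real.rpow_intCast u n, ← Real.rpow_mul hupos.le]
      have e3 : t ^ n = s ^ ((1 - θ) * (n : ℝ)) * u ^ (θ * (n : ℝ)) := by
        rw [ht, ← Real.rpow_intCast (s ^ (1 - θ) * u ^ θ) n,
          Real.mul_rpow (Real.rpow_nonneg hspos.le _) (Real.rpow_nonneg hupos.le _),
          ← Real.rpow_mul hspos.le, ← Real.rpow_mul hupos.le]
      rw [e1, e2, e3, mul_comm (1 - θ) (n : ℝ), mul_comm θ (n : ℝ)]
    conv_lhs => rw [← hnorm, ← hpow]
    ring
  refine Real.sSup_le ?_ (by positivity)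
  rintro x ⟨n, rfl⟩
  show ‖a n‖ * t ^ n ≤ _
  rw [key n]
  exact mul_le_mul
    (Real.rpow_le_rpow (by positivity) (leS n) hθ1')
    (Real.rpow_le_rpow (by positivity) (leU n) hθ0)
    (Real.rpow_nonneg (by positivity) _)
    (Real.rpow_nonneg hSnn _)
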